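/- arXiv:2112.04191 — 2 statements merged into one kernel-verified Lean document; each statement's English description precedes it below -/
import Mathlib

section
/- Error estimate for the transition map: under the hypotheses that Φ, Ψ : ℂ → ℂ are real-differentiable at z₀ with J_Ψ(z₀) > 0 and Φ_z(z₀) ≠ 0, that Ψ has a local inverse Ψ⁻¹ real-differentiable at Ψ(z₀) with fderiv ℝ Ψ⁻¹ (Ψ(z₀)) equal to the inverse of fderiv ℝ Ψ z₀, that the chain rule fderiv ℝ (Φ∘Ψ⁻¹) (Ψ(z₀)) = (fderiv ℝ Φ z₀) ∘ (fderiv ℝ Ψ⁻¹ (Ψ(z₀))) holds, and that |μ_Ψ(z₀)|·|μ_Φ(z₀)| < 1, the Beltrami coefficient of Φ∘Ψ⁻¹ at Ψ(z₀) satisfies |μ_{Φ∘Ψ⁻¹}(Ψ(z₀))| ≤ |μ_Φ(z₀) − μ_Ψ(z₀)| / (1 − |μ_Ψ(z₀)|·|μ_Φ(z₀)|). In particular, when μ_Φ(z₀) and μ_Ψ(z₀) are close, the transition map Φ∘Ψ⁻¹ is close to conformal at Ψ(z₀). -/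
/-- The Wirtinger derivative `f_z` of `f : ℂ → ℂ` at `z`. -/
noncomputable def wirtingerDz (f : ℂ → ℂ) (z : ℂ) : ℂ :=
  (1 / 2) * (fderiv ℝ f z 1 - Complex.I * fderiv ℝ f z Complex.I)

/-- The conjugate Wirtinger derivative `f_z̄` of `f : ℂ → ℂ` at `z`. -/
noncomputable def wirtingerDzbar (f : ℂ → ℂ) (z : ℂ) : ℂ :=
  (1 / 2) * (fderiv ℝ f z 1 + Complex.I * fderiv ℝ f z Complex.I)

/-- The Beltrami coefficient `μ_f(z) = f_z̄ / f_z` of `f` at `z`. -/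
noncomputable def beltrami (f : ℂ → ℂ) (z : ℂ) : ℂ :=
  wirtingerDzbar f z / wirtingerDz f z

/-- The Jacobian determinant of `f : ℂ → ℂ` at `z`. -/
noncomputable def jacobianDet (f : ℂ → ℂ) (z : ℂ) : ℝ :=
  LinearMap.det ((fderiv ℝ f z) : ℂ →ₗ[ℝ] ℂ)

open Complex
noncomputable def clmA (L : ℂ →L[ℝ] ℂ) : ℂ := (1 / 2) * (L 1 - Complex.I * L Complex.I)
noncomputable def clmB (L : ℂ →L[ℝ] ℂ) : ℂ := (1 / 2) * (L 1 + Complex.I * L Complex.I)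

lemma clm_apply (L : ℂ →L[ℝ] ℂ) (v : ℂ) :
    L v = clmA L * v + clmB L * (starRingEnd ℂ) v := by
  have h1 : L v = (v.re : ℂ) * L 1 + (v.im : ℂ) * L I := by
    conv_lhs => rw [show v = v.re • (1 : ℂ) + v.im • I by
      rw [Complex.real_smul, Complex.real_smul, mul_one]; exact (Complex.re_add_im v).symm]
    rw [map_add, map_smul, map_smul]
    simp [Complex.real_smul]
  rw [h1]; simp only [clmA, clmB]
  rw [Complex.ext_iff]
  constructor <;> simp <;> ring


lemma clmA_comp (K M : ℂ →L[ℝ] ℂ) :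
    clmA (K.comp M) = clmA K * clmA M + clmB K * (starRingEnd ℂ) (clmB M) := by
  have h1 : (K.comp M) 1 = K (M 1) := rfl
  have h2 : (K.comp M) I = K (M I) := rfl
  simp only [clmA, clmB] at *
  rw [h1, h2, clm_apply M 1, clm_apply M I, clm_apply K, clm_apply K]
  simp only [clmA, clmB]
  rw [Complex.ext_iff]
  constructor <;> simp <;> ring

lemma clmB_comp (K M : ℂ →L[ℝ] ℂ) :
    clmB (K.comp M) = clmA K * clmB M + clmB K * (starRingEnd ℂ) (clmA M) := by
  have h1 : (K.comp M) 1 = K (M 1) := rfl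
  have h2 : (K.comp M) I = K (M I) := rfl
  simp only [clmA, clmB] at *
  rw [h1, h2, clm_apply M 1, clm_apply M I, clm_apply K, clm_apply K]
  simp only [clmA, clmB]
  rw [Complex.ext_iff]
  constructor <;> simp <;> ring

lemma det_clm (L : ℂ →L[ℝ] ℂ) :
    LinearMap.det (L : ℂ →ₗ[ℝ] ℂ) = Complex.normSq (clmA L) - Complex.normSq (clmB L) := by
  rw [← LinearMap.det_toMatrix Complex.basisOneI, Matrix.det_fin_two]
  simp only [LinearMap.toMatrix_apply, Complex.coe_basisOneI, Complex.coe_basisOneI_repr]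
  simp only [clmA, clmB, Complex.normSq_apply]
  simp [Matrix.cons_val_zero, Matrix.cons_val_one]
  ring

/-- Error estimate for the transition map `Φ ∘ Ψ⁻¹`: under the stated differentiability,
invertibility and chain-rule hypotheses, and provided `|μ_Ψ(z₀)|·|μ_Φ(z₀)| < 1`, one has
`|μ_{Φ∘Ψ⁻¹}(Ψ(z₀))| ≤ |μ_Φ(z₀) − μ_Ψ(z₀)| / (1 − |μ_Ψ(z₀)|·|μ_Φ(z₀)|)`. -/
theorem beltrami_transition_estimate (Φ Ψ Ψinv : ℂ → ℂ) (z₀ : ℂ)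
    (hΦ : DifferentiableAt ℝ Φ z₀) (hΨ : DifferentiableAt ℝ Ψ z₀)
    (hJ : 0 < jacobianDet Ψ z₀) (hΦz : wirtingerDz Φ z₀ ≠ 0)
    (hinv : DifferentiableAt ℝ Ψinv (Ψ z₀))
    (hleft : (fderiv ℝ Ψinv (Ψ z₀)).comp (fderiv ℝ Ψ z₀) = ContinuousLinearMap.id ℝ ℂ)
    (hright : (fderiv ℝ Ψ z₀).comp (fderiv ℝ Ψinv (Ψ z₀)) = ContinuousLinearMap.id ℝ ℂ)
    (hchain : fderiv ℝ (Φ ∘ Ψinv) (Ψ z₀) =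
      (fderiv ℝ Φ z₀).comp (fderiv ℝ Ψinv (Ψ z₀)))
    (hsmall : ‖beltrami Ψ z₀‖ * ‖beltrami Φ z₀‖ < 1) :
    ‖beltrami (Φ ∘ Ψinv) (Ψ z₀)‖ ≤
      ‖beltrami Φ z₀ - beltrami Ψ z₀‖ /
        (1 - ‖beltrami Ψ z₀‖ * ‖beltrami Φ z₀‖) := by
  set L := fderiv ℝ Ψ z₀ with hL
  set K := fderiv ℝ Φ z₀ with hK
  set M := fderiv ℝ Ψinv (Ψ z₀) with hM
  set a := clmA L with ha'
  set b := clmB L with hb'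
  set p := clmA K with hp'
  set q := clmB K with hq'
  set c := clmA M with hc'
  set d := clmB M with hd'
  have hp : p ≠ 0 := hΦz
  -- Jacobian
  set Dr : ℝ := Complex.normSq a - Complex.normSq b with hDr'
  have hDr : 0 < Dr := by
    have := det_clm L
    rw [jacobianDet] at hJ
    rw [hDr']; rw [this] at hJ; exact hJ
  have ha : a ≠ 0 := by
    intro h
    have hDr2 : 0 < Complex.normSq a - Complex.normSq b := hDr
    have h0 : Complex.normSq a = 0 := by rw [h]; simp
    nlinarith [Complex.normSq_nonneg b]
  have hca : (starRingEnd ℂ) a ≠ 0 := by simpa using ha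
  have hDc : a * (starRingEnd ℂ) a - b * (starRingEnd ℂ) b = (Dr : ℂ) := by
    rw [Complex.mul_conj, Complex.mul_conj, hDr']
    push_cast; ring
  -- inverse relations
  have h1 : a * c + b * (starRingEnd ℂ) d = 1 := by
    have := clmA_comp L M
    rw [hright] at this
    rw [← ha', ← hb', ← hc', ← hd'] at this
    simp only [clmA, ContinuousLinearMap.id_apply, Complex.I_mul_I] at this
    rw [← this]; norm_num
  have h2 : a * d + b * (starRingEnd ℂ) c = 0 := by
    have := clmB_comp L M
    rw [hright] at this
    rw [← ha', ← hb', ← hc', ← hd'] at this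
    simp only [clmB, ContinuousLinearMap.id_apply, Complex.I_mul_I] at this
    rw [← this]; norm_num
  have h1' := congrArg (starRingEnd ℂ) h1
  have h2' := congrArg (starRingEnd ℂ) h2
  simp only [map_add, map_mul, map_one, map_zero, Complex.conj_conj] at h1' h2'
  have hc : c * (Dr : ℂ) = (starRingEnd ℂ) a := by
    rw [← hDc]; linear_combination (starRingEnd ℂ) a * h1 - b * h2'
  have hd : d * (Dr : ℂ) = -b := by
    rw [← hDc]; linear_combination (starRingEnd ℂ) a * h2 - b * h1'
  have hcc := congrArg (starRingEnd ℂ) hc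
  have hdc := congrArg (starRingEnd ℂ) hd
  simp only [map_mul, Complex.conj_ofReal, Complex.conj_conj, map_neg] at hcc hdc
  -- composite
  set A := clmA (fderiv ℝ (Φ ∘ Ψinv) (Ψ z₀)) with hA'
  set B := clmB (fderiv ℝ (Φ ∘ Ψinv) (Ψ z₀)) with hB'
  have hAe : A = p * c + q * (starRingEnd ℂ) d := by
    rw [hA', hchain, clmA_comp, ← hp', ← hq', ← hc', ← hd']
  have hBe : B = p * d + q * (starRingEnd ℂ) c := by
    rw [hB', hchain, clmB_comp, ← hp', ← hq', ← hc', ← hd']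
  have hAD : A * (Dr : ℂ) = p * (starRingEnd ℂ) a - q * (starRingEnd ℂ) b := by
    rw [hAe]; linear_combination p * hc + q * hdc
  have hBD : B * (Dr : ℂ) = q * a - p * b := by
    rw [hBe]; linear_combination p * hd + q * hcc
  -- beltrami coefficients
  set mF := beltrami Φ z₀ with hmF
  set mP := beltrami Ψ z₀ with hmP
  have hmFe : mF = q / p := rfl
  have hmPe : mP = b / a := rfl
  have hnum : q * a - p * b = p * a * (mF - mP) := by
    rw [hmFe, hmPe]; field_simp
  have hden : p * (starRingEnd ℂ) a - q * (starRingEnd ℂ) b =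
      p * (starRingEnd ℂ) a * (1 - mF * (starRingEnd ℂ) mP) := by
    rw [hmFe, hmPe, map_div₀]; field_simp
  -- abs estimates
  set s : ℝ := ‖mP‖ * ‖mF‖ with hs'
  set t : ℝ := ‖1 - mF * (starRingEnd ℂ) mP‖ with ht'
  have hst : 1 - s ≤ t := by
    have h := norm_add_le (1 - mF * (starRingEnd ℂ) mP) (mF * (starRingEnd ℂ) mP)
    simp only [sub_add_cancel, norm_one] at h
    have : ‖mF * (starRingEnd ℂ) mP‖ = s := by
      rw [norm_mul, Complex.norm_conj, hs']; ring
    rw [this] at h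
    linarith
  have hspos : 0 < 1 - s := by linarith
  have htpos : 0 < t := lt_of_lt_of_le hspos hst
  set r : ℝ := ‖mF - mP‖ with hr'
  have hCpos : 0 < ‖p‖ * ‖a‖ := by
    apply mul_pos <;> simpa [norm_pos_iff] using (by assumption : _ ≠ (0:ℂ))
  have hbel : beltrami (Φ ∘ Ψinv) (Ψ z₀) = B / A := rfl
  have habsD : ‖((Dr : ℝ) : ℂ)‖ = Dr := by
    rw [Complex.norm_real, Real.norm_eq_abs, abs_of_pos hDr]
  have e1 : ‖B‖ * Dr = (‖p‖ * ‖a‖) * r := by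
    have h := congrArg norm hBD
    rw [norm_mul, habsD, hnum, norm_mul, norm_mul] at h
    rw [h, hr']
  have e2 : ‖A‖ * Dr = (‖p‖ * ‖a‖) * t := by
    have h := congrArg norm hAD
    rw [norm_mul, habsD, hden, norm_mul, norm_mul, Complex.norm_conj] at h
    rw [h, ht']
  have hApos : 0 < ‖A‖ := by
    have h0 : 0 < (‖p‖ * ‖a‖) * t := mul_pos hCpos htpos
    rw [← e2] at h0
    nlinarith [norm_nonneg A]
  have key : ‖B‖ / ‖A‖ = r / t := by
    rw [div_eq_div_iff hApos.ne' htpos.ne']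
    have hq : ‖B‖ * t * Dr = r * ‖A‖ * Dr := by
      linear_combination t * e1 - r * e2
    exact mul_right_cancel₀ hDr.ne' hq
  rw [hbel, norm_div, key]
  gcongr
end

section
/- Vanishing of the least-squares quasi-conformal energy density characterizes the Beltrami equation: let f : ℂ → ℂ be real-differentiable at z, write f = u + iv with u, v real-valued, ∇u = (u_x, u_y), ∇v = (v_x, v_y) where L(1) = (u_x, v_x) and L(i) = (u_y, v_y) for L = fderiv ℝ f z. Let μ ∈ ℂ with |μ| < 1, P = P(μ), and J = [[0, −1], [1, 0]]. Then f satisfies the Beltrami equation f_z̄ = μ·f_z at z if and only if P·∇u + J·P·∇v = 0. -/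
/-- The gradient `∇u = (u_x, u_y)` of the real part `u` of `f = u + iv`, computed from
`L = fderiv ℝ f z` via `L(1) = (u_x, v_x)` and `L(i) = (u_y, v_y)`. -/
noncomputable def gradRe (f : ℂ → ℂ) (z : ℂ) : Fin 2 → ℝ :=
  ![(fderiv ℝ f z 1).re, (fderiv ℝ f z Complex.I).re]

/-- The gradient `∇v = (v_x, v_y)` of the imaginary part `v` of `f = u + iv`. -/
noncomputable def gradIm (f : ℂ → ℂ) (z : ℂ) : Fin 2 → ℝ :=
  ![(fderiv ℝ f z 1).im, (fderiv ℝ f z Complex.I).im]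

/-- The matrix `P(μ)` associated with a Beltrami coefficient `μ = ρ + iτ`. -/
noncomputable def Pmat (μ : ℂ) : Matrix (Fin 2) (Fin 2) ℝ :=
  (1 / Real.sqrt (1 - ‖μ‖ ^ 2)) •
    !![1 - μ.re, -μ.im; -μ.im, 1 + μ.re]

/-- The matrix `J = [[0, −1], [1, 0]]`. -/
def Jmat : Matrix (Fin 2) (Fin 2) ℝ := !![0, -1; 1, 0]

/-- Vanishing of the least-squares quasi-conformal energy density characterizes the
Beltrami equation: for `f : ℂ → ℂ` real-differentiable at `z`, written `f = u + iv`,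
and `μ ∈ ℂ` with `|μ| < 1`, the Beltrami equation `f_z̄ = μ·f_z` holds at `z` if and
only if `P(μ)·∇u + J·P(μ)·∇v = 0`. -/
theorem beltrami_eq_iff_energy_density_zero (f : ℂ → ℂ) (z : ℂ)
    (hf : DifferentiableAt ℝ f z) (μ : ℂ) (hμ : ‖μ‖ < 1) :
    wirtingerDzbar f z = μ * wirtingerDz f z ↔
      (Pmat μ).mulVec (gradRe f z) + Jmat.mulVec ((Pmat μ).mulVec (gradIm f z)) = 0 := by
  have h1 : (0:ℝ) < 1 - ‖μ‖ ^ 2 := by nlinarith [norm_nonneg μ]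
  have hs0 : 0 < Real.sqrt (1 - ‖μ‖ ^ 2) := Real.sqrt_pos.mpr h1
  simp only [wirtingerDz, wirtingerDzbar, Pmat, Jmat, gradRe, gradIm, Complex.ext_iff,
    funext_iff, Fin.forall_fin_two, Matrix.mulVec, dotProduct, Fin.sum_univ_two,
    Matrix.smul_apply, Matrix.of_apply, Matrix.cons_val', Matrix.cons_val_zero, Matrix.cons_val_one,
    Matrix.head_cons, Matrix.head_fin_const, Matrix.empty_val', Matrix.cons_val_fin_one,
    Pi.add_apply, Pi.zero_apply, smul_eq_mul,
    Complex.add_re, Complex.add_im, Complex.mul_re, Complex.mul_im, Complex.sub_re,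
    Complex.sub_im, Complex.I_re, Complex.I_im, Complex.re_ofNat, Complex.im_ofNat,
    Complex.div_re, Complex.div_im, Complex.one_re, Complex.one_im, Complex.normSq_ofNat]
  set a := (fderiv ℝ f z 1).re with ha
  set b := (fderiv ℝ f z 1).im with hb
  set c := (fderiv ℝ f z Complex.I).re with hc
  set d := (fderiv ℝ f z Complex.I).im with hd
  set s := Real.sqrt (1 - ‖μ‖ ^ 2) with hsdef
  constructor
  · rintro ⟨x, y⟩
    have e1 : (1 - μ.re) * a + μ.im * b - μ.im * c - (1 + μ.re) * d = 0 := by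
      linear_combination 2 * x
    have e2 : -(μ.im * a) + (1 - μ.re) * b + (1 + μ.re) * c - μ.im * d = 0 := by
      linear_combination 2 * y
    exact ⟨by linear_combination (1/s) * e1, by linear_combination (1/s) * e2⟩
  · rintro ⟨g1, g2⟩
    have hne : (1/s) ≠ 0 := by positivity
    have e1 : (1/s) * ((1 - μ.re) * a + μ.im * b - μ.im * c - (1 + μ.re) * d) = 0 := by
      linear_combination g1
    have e2 : (1/s) * (-(μ.im * a) + (1 - μ.re) * b + (1 + μ.re) * c - μ.im * d) = 0 := by
      linear_combination g2
    have e1' := (mul_eq_zero.mp e1).resolve_left hne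
    have e2' := (mul_eq_zero.mp e2).resolve_left hne
    exact ⟨by linear_combination e1' / 2, by linear_combination e2' / 2⟩
end
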